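/- For every real number M there exists a 2-edge-coloured graph G = (Γ, R, B) with R ≠ ∅ and B ≠ ∅ and a complex number z with nonzero imaginary part such that |z| > M and P(z) = 0, where P is the chromatic polynomial of G evaluated over the complex numbers. In other words, non-real roots of chromatic polynomials of bichromatic 2-edge-coloured graphs can have arbitrarily large modulus. -/

import Mathlib

open SimpleGraph Polynomial

/-- A `k`-colouring of a mixed 2-edge-coloured graph with red edge graph `R`,
blue edge graph `B`, and extra uncoloured edge graph `F`. -/
def IsMixedColouring {V : Type*} (R B F : SimpleGraph V) {k : ℕ} (c : V → Fin k) : Prop :=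
  (∀ u v, (R ⊔ B ⊔ F).Adj u v → c u ≠ c v) ∧
  (∀ u x v y, R.Adj u x → B.Adj v y → c u = c v → c x ≠ c y)

/-- The number of `k`-colourings of the mixed 2-edge-coloured graph `(R, B, F)`. -/
noncomputable def numColourings {V : Type*} (R B F : SimpleGraph V) (k : ℕ) : ℕ :=
  Nat.card {c : V → Fin k // IsMixedColouring R B F c}

/-- A bichromatic 2-path `(x, u, y)`: `xu` red, `uy` blue, `xy` not an edge of `S(M)`. -/
def IsBiPath {V : Type*} (R B F : SimpleGraph V) (x u y : V) : Prop :=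
  R.Adj x u ∧ B.Adj u y ∧ ¬(R ⊔ B ⊔ F).Adj x y

/-- The number of bichromatic 2-paths. -/
noncomputable def numBiPaths {V : Type*} (R B F : SimpleGraph V) : ℕ :=
  Nat.card {p : V × V × V // IsBiPath R B F p.1 p.2.1 p.2.2}

/-- The graph `Λ(M)`: all edges of `S(M)` plus edges joining the ends of
bichromatic 2-paths. -/
def LambdaGraph {V : Type*} (R B F : SimpleGraph V) : SimpleGraph V where
  Adj a b := a ≠ b ∧ ((R ⊔ B ⊔ F).Adj a b ∨
    ∃ w, IsBiPath R B F a w b ∨ IsBiPath R B F b w a)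
  symm := by
    refine ⟨?_⟩
    rintro a b ⟨hab, h⟩
    refine ⟨hab.symm, ?_⟩
    rcases h with h | ⟨w, h⟩
    · exact Or.inl h.symm
    · exact Or.inr ⟨w, h.symm⟩
  loopless := ⟨fun a h => h.1 rfl⟩

/-- `(p.1, p.2)` is a pair of obstructing edges: `p.1` a red edge `ux`, `p.2` a blue edge
`vy`, with the subgraph of `Λ` induced on `{u, x, v, y}` of chromatic number 2. -/
def IsObstructingPair {V : Type*} (R B F : SimpleGraph V) (p : Sym2 V × Sym2 V) : Prop :=
  ∃ u x v y : V, p.1 = s(u, x) ∧ p.2 = s(v, y) ∧ R.Adj u x ∧ B.Adj v y ∧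
    (SimpleGraph.induce {u, x, v, y} (LambdaGraph R B F)).chromaticNumber = 2

/-- The number of pairs of obstructing edges. -/
noncomputable def numObstructing {V : Type*} (R B F : SimpleGraph V) : ℕ :=
  Nat.card {p : Sym2 V × Sym2 V // IsObstructingPair R B F p}

/-- The number of 3-element vertex subsets inducing a triangle. -/
noncomputable def numTriangles {V : Type*} (G : SimpleGraph V) : ℕ :=
  Nat.card {s : Finset V // s.card = 3 ∧ ∀ a ∈ s, ∀ b ∈ s, a ≠ b → G.Adj a b}

/-- A 2-edge-coloured graph is chromatically invariant when for each `k` its number of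
`k`-colourings equals the number of proper `k`-colourings of the underlying graph. -/
def ChromaticallyInvariant {V : Type*} (R B : SimpleGraph V) : Prop :=
  ∀ k : ℕ, Nat.card {c : V → Fin k // IsMixedColouring R B ⊥ c} =
    Nat.card {c : V → Fin k // ∀ u v, (R ⊔ B).Adj u v → c u ≠ c v}

/-- A graph is a join when its vertex set has a partition into two non-empty parts with
every vertex of one part adjacent to every vertex of the other. -/
def IsJoin {W : Type*} (G : SimpleGraph W) : Prop :=
  ∃ X Y : Set W, X.Nonempty ∧ Y.Nonempty ∧ Disjoint X Y ∧ X ∪ Y = Set.univ ∧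
    ∀ x ∈ X, ∀ y ∈ Y, G.Adj x y

/-- Disjoint union of two simple graphs. -/
def disjUnion {α β : Type*} (G : SimpleGraph α) (H : SimpleGraph β) :
    SimpleGraph (α ⊕ β) where
  Adj a b := match a, b with
    | Sum.inl a, Sum.inl b => G.Adj a b
    | Sum.inr a, Sum.inr b => H.Adj a b
    | _, _ => False
  symm := ⟨by rintro (a | a) (b | b) h <;> simp_all <;> exact h.symm⟩
  loopless := ⟨by rintro (a | a) h <;> exact (SimpleGraph.irrefl _) h⟩

/-- The complete bipartite "cross" graph between the two sides of a sum type. -/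
def crossGraph (α β : Type*) : SimpleGraph (α ⊕ β) where
  Adj a b := match a, b with
    | Sum.inl _, Sum.inr _ => True
    | Sum.inr _, Sum.inl _ => True
    | _, _ => False
  symm := ⟨by rintro (a | a) (b | b) h <;> trivial⟩
  loopless := ⟨by rintro (a | a) h <;> exact h⟩
namespace BichromAux

attribute [local instance] Classical.propDecidable

def cliqueG (a n : ℕ) : SimpleGraph (Fin n) where
  Adj u v := u.val < a ∧ v.val < a ∧ u ≠ v
  symm := ⟨by rintro u v ⟨h1, h2, h3⟩; exact ⟨h2, h1, h3.symm⟩⟩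
  loopless := ⟨fun u h => h.2.2 rfl⟩

def starG (a n : ℕ) : SimpleGraph (Fin n) where
  Adj u v := (u.val = a ∧ a < v.val) ∨ (v.val = a ∧ a < u.val)
  symm := ⟨by rintro u v (h | h); exacts [Or.inr h, Or.inl h]⟩
  loopless := ⟨fun u h => by rcases h with ⟨h1, h2⟩ | ⟨h1, h2⟩ <;> omega⟩

variable {a k : ℕ}

def ctr (a : ℕ) : Fin (a + 4) := ⟨a, by omega⟩

def leaf (a : ℕ) (i : Fin 3) : Fin (a + 4) := ⟨a + 1 + i, by omega⟩

lemma mixed_iff (c : Fin (a + 4) → Fin k) :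
    IsMixedColouring (cliqueG a (a+4)) (starG a (a+4)) ⊥ c ↔
    (∀ u v : Fin (a+4), u.val < a → v.val < a → u ≠ v → c u ≠ c v) ∧
    (∀ v : Fin (a+4), a < v.val →
      c v ≠ c (ctr a) ∧
      ¬((∃ u : Fin (a+4), u.val < a ∧ c u = c (ctr a)) ∧
        (∃ x : Fin (a+4), x.val < a ∧ c x = c v))) := by
  constructor
  · rintro ⟨h1, h2⟩
    constructor
    · intro u v hu hv huv
      exact h1 u v (by simp [cliqueG, starG, hu, hv, huv])
    · intro v hv
      have hvc : c v ≠ c (ctr a) := by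
        have := h1 (ctr a) v (by simp [cliqueG, starG, ctr, hv])
        exact fun h => this h.symm
      refine ⟨hvc, ?_⟩
      rintro ⟨⟨u, hu, hcu⟩, ⟨x, hx, hcx⟩⟩
      by_cases hux : u = x
      · subst hux; exact hvc (hcx.symm.trans hcu).symm.symm |>.elim
      · have hR : (cliqueG a (a+4)).Adj u x := ⟨hu, hx, hux⟩
        have hB : (starG a (a+4)).Adj (ctr a) v := Or.inl ⟨rfl, hv⟩
        exact h2 u x (ctr a) v hR hB hcu hcx
  · rintro ⟨h1, h2⟩
    constructor
    · intro u v hadj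
      simp only [SimpleGraph.sup_adj, SimpleGraph.bot_adj, or_false] at hadj
      rcases hadj with ⟨hu, hv, huv⟩ | (⟨hu, hv⟩ | ⟨hv, hu⟩)
      · exact h1 u v hu hv huv
      · have : u = ctr a := Fin.ext hu
        subst this
        exact fun h => (h2 v hv).1 h.symm
      · have : v = ctr a := Fin.ext hv
        subst this
        exact (h2 u hu).1
    · intro u x v y hR hB hcuv
      obtain ⟨hu, hx, hux⟩ := hR
      rcases hB with ⟨hv, hy⟩ | ⟨hy, hv⟩
      · have : v = ctr a := Fin.ext hv
        subst this
        intro hxy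
        exact (h2 y hy).2 ⟨⟨u, hu, hcuv⟩, ⟨x, hx, hxy⟩⟩
      · have : y = ctr a := Fin.ext hy
        subst this
        intro hxy
        exact (h2 v hv).2 ⟨⟨x, hx, hxy⟩, ⟨u, hu, hcuv⟩⟩

def bwd (a : ℕ) (f : Fin a → Fin k) (d : Fin k) (l : Fin 3 → Fin k) :
    Fin (a + 4) → Fin k := fun v =>
  if h : v.val < a then f ⟨v.val, h⟩
  else if h2 : v.val = a then d
  else l ⟨v.val - (a+1), by have := v.isLt; omega⟩

lemma bwd_clique (f : Fin a → Fin k) (d : Fin k) (l : Fin 3 → Fin k)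
    (v : Fin (a+4)) (h : v.val < a) : bwd a f d l v = f ⟨v.val, h⟩ := by
  simp [bwd, h]

lemma bwd_ctr (f : Fin a → Fin k) (d : Fin k) (l : Fin 3 → Fin k) :
    bwd a f d l (ctr a) = d := by
  simp [bwd, ctr]

lemma bwd_leaf' (f : Fin a → Fin k) (d : Fin k) (l : Fin 3 → Fin k)
    (v : Fin (a+4)) (h : a < v.val) :
    bwd a f d l v = l ⟨v.val - (a+1), by have := v.isLt; omega⟩ := by
  have h1 : ¬ v.val < a := by omega
  have h2 : ¬ v.val = a := by omega
  simp [bwd, h1, h2]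

lemma bwd_leaf (f : Fin a → Fin k) (d : Fin k) (l : Fin 3 → Fin k) (i : Fin 3) :
    bwd a f d l (leaf a i) = l i := by
  rw [bwd_leaf' f d l (leaf a i) (by simp [leaf]; omega)]
  congr 1
  apply Fin.ext
  simp only [leaf]
  omega

/-- The condition describing colourings in coordinates. -/
def Cond (a k : ℕ) (q : (Fin a → Fin k) × Fin k × (Fin 3 → Fin k)) : Prop :=
  Function.Injective q.1 ∧
  ∀ i, q.2.2 i ≠ q.2.1 ∧ ¬((∃ j, q.1 j = q.2.1) ∧ (∃ j, q.1 j = q.2.2 i))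

def mixedEquiv (a k : ℕ) :
    {c : Fin (a+4) → Fin k // IsMixedColouring (cliqueG a (a+4)) (starG a (a+4)) ⊥ c} ≃
    {q : (Fin a → Fin k) × Fin k × (Fin 3 → Fin k) // Cond a k q} where
  toFun := fun ⟨c, hc⟩ => by
    refine ⟨(fun j => c ⟨j.val, by omega⟩, c (ctr a), fun i => c (leaf a i)), ?_⟩
    obtain ⟨h1, h2⟩ := (mixed_iff c).mp hc
    refine ⟨?_, ?_⟩
    · intro j j' hjj
      by_contra hne
      exact h1 ⟨j.val, by omega⟩ ⟨j'.val, by omega⟩ j.isLt j'.isLt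
        (fun h => hne (Fin.ext (Fin.mk_eq_mk.mp h))) hjj
    · intro i
      obtain ⟨ha1, ha2⟩ := h2 (leaf a i) (by simp [leaf]; omega)
      refine ⟨ha1, fun ⟨⟨j, hj⟩, ⟨j', hj'⟩⟩ => ha2 ⟨⟨⟨j.val, by omega⟩, j.isLt, hj⟩,
        ⟨⟨j'.val, by omega⟩, j'.isLt, hj'⟩⟩⟩
  invFun := fun ⟨⟨f, d, l⟩, hq⟩ => by
    refine ⟨bwd a f d l, (mixed_iff _).mpr ⟨?_, ?_⟩⟩
    · intro u v hu hv huv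
      rw [bwd_clique f d l u hu, bwd_clique f d l v hv]
      intro h
      exact huv (Fin.ext (Fin.mk_eq_mk.mp (hq.1 h)))
    · intro v hv
      rw [bwd_leaf' f d l v hv, bwd_ctr]
      obtain ⟨hb1, hb2⟩ := hq.2 ⟨v.val - (a+1), by have := v.isLt; omega⟩
      refine ⟨hb1, ?_⟩
      rintro ⟨⟨u, hu, hcu⟩, ⟨x, hx, hcx⟩⟩
      rw [bwd_clique f d l u hu] at hcu
      rw [bwd_clique f d l x hx] at hcx
      exact hb2 ⟨⟨_, hcu⟩, ⟨_, hcx⟩⟩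
  left_inv := by
    rintro ⟨c, hc⟩
    apply Subtype.ext
    funext v
    dsimp only
    rcases lt_trichotomy v.val a with h | h | h
    · rw [bwd_clique _ _ _ v h]
    · rw [show v = ctr a from Fin.ext h, bwd_ctr]
    · rw [bwd_leaf' _ _ _ v h]
      congr 1
      apply Fin.ext
      simp [leaf]
      have := v.isLt
      omega
  right_inv := by
    rintro ⟨⟨f, d, l⟩, hq⟩
    apply Subtype.ext
    refine Prod.ext ?_ (Prod.ext ?_ ?_)
    · funext j
      simp only
      rw [bwd_clique f d l ⟨j.val, by omega⟩ j.isLt]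
    · simp only
      rw [bwd_ctr]
    · funext i
      simp only
      rw [bwd_leaf]


lemma card_inner (f : Fin a → Fin k) (hf : Function.Injective f) (d : Fin k) :
    Nat.card {x : Fin k // x ≠ d ∧ ¬((∃ j, f j = d) ∧ (∃ j, f j = x))} =
    if (∃ j, f j = d) then k - a else k - 1 := by
  have hrange : Nat.card {x : Fin k // ∃ j, f j = x} = a := by
    have h1 : Nat.card (Set.range f) = Nat.card (Fin a) := Nat.card_range_of_injective hf
    exact h1.trans (Nat.card_fin a)
  by_cases hD : ∃ j, f j = d
  · rw [if_pos hD]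
    have e : {x : Fin k // x ≠ d ∧ ¬((∃ j, f j = d) ∧ (∃ j, f j = x))} ≃
        {x : Fin k // ¬ ∃ j, f j = x} :=
      Equiv.subtypeEquivRight (fun x => by
        constructor
        · rintro ⟨h1, h2⟩ hx; exact h2 ⟨hD, hx⟩
        · intro h; exact ⟨fun he => h (he ▸ hD), fun hh => h hh.2⟩)
    rw [Nat.card_congr e, Nat.card_eq_fintype_card, Fintype.card_subtype_compl,
      Fintype.card_fin]
    congr 1
    rw [← Nat.card_eq_fintype_card, hrange]
  · rw [if_neg hD]
    have e : {x : Fin k // x ≠ d ∧ ¬((∃ j, f j = d) ∧ (∃ j, f j = x))} ≃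
        {x : Fin k // ¬ (x = d)} :=
      Equiv.subtypeEquivRight (fun x => by
        constructor
        · rintro ⟨h1, h2⟩ hx; exact h1 hx
        · intro h; exact ⟨h, fun hh => hD hh.1⟩)
    rw [Nat.card_congr e, Nat.card_eq_fintype_card, Fintype.card_subtype_compl,
      Fintype.card_fin, Fintype.card_subtype_eq]

lemma card_fixedf (f : Fin a → Fin k) (hf : Function.Injective f) :
    Nat.card {p : Fin k × (Fin 3 → Fin k) //
      ∀ i, p.2 i ≠ p.1 ∧ ¬((∃ j, f j = p.1) ∧ (∃ j, f j = p.2 i))} =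
    a * (k-a)^3 + (k-a) * (k-1)^3 := by
  have hrange : Nat.card {x : Fin k // ∃ j, f j = x} = a := by
    have h1 : Nat.card (Set.range f) = Nat.card (Fin a) := Nat.card_range_of_injective hf
    exact h1.trans (Nat.card_fin a)
  rw [Nat.card_congr (Equiv.subtypeProdEquivSigmaSubtype
    (fun (d : Fin k) (l : Fin 3 → Fin k) =>
      ∀ i, l i ≠ d ∧ ¬((∃ j, f j = d) ∧ (∃ j, f j = l i))))]
  rw [Nat.card_eq_fintype_card, Fintype.card_sigma]
  have hcard : ∀ d : Fin k,
      Fintype.card {l : Fin 3 → Fin k // ∀ i, l i ≠ d ∧ ¬((∃ j, f j = d) ∧ (∃ j, f j = l i))}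
      = if (∃ j, f j = d) then (k - a)^3 else (k - 1)^3 := by
    intro d
    rw [← Nat.card_eq_fintype_card,
      Nat.card_congr (Equiv.subtypePiEquivPi
        (p := fun (_ : Fin 3) (b : Fin k) => b ≠ d ∧ ¬((∃ j, f j = d) ∧ (∃ j, f j = b)))),
      Nat.card_pi]
    rw [Finset.prod_congr rfl (fun i _ => card_inner f hf d)]
    rw [Finset.prod_const, Finset.card_univ, Fintype.card_fin,
      apply_ite (fun x : ℕ => x ^ 3)]
  rw [Finset.sum_congr rfl (fun d _ => hcard d)]
  rw [Finset.sum_ite, Finset.sum_const, Finset.sum_const, smul_eq_mul, smul_eq_mul]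
  have h1 : (Finset.filter (fun d : Fin k => ∃ j, f j = d) Finset.univ).card = a := by
    rw [← Fintype.card_subtype, ← Nat.card_eq_fintype_card, hrange]
  have h2 : (Finset.filter (fun d : Fin k => ¬ ∃ j, f j = d) Finset.univ).card = k - a := by
    have := Finset.card_filter_add_card_filter_not
      (s := (Finset.univ : Finset (Fin k))) (fun d : Fin k => ∃ j, f j = d)
    rw [Finset.card_univ, Fintype.card_fin, h1] at this
    omega
  rw [h1, h2]

lemma count_eq (a k : ℕ) :
    numColourings (cliqueG a (a+4)) (starG a (a+4)) ⊥ k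
      = k.descFactorial a * ((k-a) * ((k-1)^3 + a * (k-a)^2)) := by
  rw [numColourings, Nat.card_congr ((mixedEquiv a k).trans
    (Equiv.subtypeProdEquivSigmaSubtype
    (fun (f : Fin a → Fin k) (p : Fin k × (Fin 3 → Fin k)) =>
      Function.Injective f ∧
      ∀ i, p.2 i ≠ p.1 ∧ ¬((∃ j, f j = p.1) ∧ (∃ j, f j = p.2 i)))))]
  rw [Nat.card_eq_fintype_card, Fintype.card_sigma]
  have hcard : ∀ f : Fin a → Fin k,
      Fintype.card {p : Fin k × (Fin 3 → Fin k) //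
        Function.Injective f ∧
        ∀ i, p.2 i ≠ p.1 ∧ ¬((∃ j, f j = p.1) ∧ (∃ j, f j = p.2 i))}
      = if Function.Injective f then a * (k-a)^3 + (k-a) * (k-1)^3 else 0 := by
    intro f
    by_cases hf : Function.Injective f
    · rw [if_pos hf, ← Nat.card_eq_fintype_card,
        Nat.card_congr (Equiv.subtypeEquivRight (fun p => and_iff_right hf)),
        card_fixedf f hf]
    · rw [if_neg hf]
      have : IsEmpty {p : Fin k × (Fin 3 → Fin k) //
          Function.Injective f ∧
          ∀ i, p.2 i ≠ p.1 ∧ ¬((∃ j, f j = p.1) ∧ (∃ j, f j = p.2 i))} :=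
        ⟨fun p => hf p.2.1⟩
      exact Fintype.card_eq_zero
  rw [Finset.sum_congr rfl (fun f _ => hcard f)]
  rw [Finset.sum_ite, Finset.sum_const, Finset.sum_const, smul_eq_mul, smul_eq_mul,
    mul_zero, add_zero]
  have h1 : (Finset.filter (fun f : Fin a → Fin k => Function.Injective f) Finset.univ).card
      = k.descFactorial a := by
    rw [← Fintype.card_subtype]
    rw [Fintype.card_congr (Equiv.subtypeInjectiveEquivEmbedding (Fin a) (Fin k))]
    rw [Fintype.card_embedding_eq, Fintype.card_fin, Fintype.card_fin]
  rw [h1]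
  congr 1
  ring



noncomputable def Pc (a : ℕ) : ℚ[X] :=
  X^3 + (C ((a:ℚ) - 3) * X^2 + C (3 - 2*(a:ℚ)^2) * X + C ((a:ℚ)^3 - 1))

lemma Pc_eq (a : ℕ) : Pc a = (X - 1)^3 + C (a:ℚ) * (X - C (a:ℚ))^2 := by
  rw [Pc]
  simp only [map_sub, map_add, map_mul, map_pow, map_one, map_ofNat]
  ring

lemma Pc_monic (a : ℕ) : (Pc a).Monic := by
  apply Polynomial.monic_X_pow_add
  apply lt_of_le_of_lt (Polynomial.degree_quadratic_le)
  decide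

lemma Pc_natDegree (a : ℕ) : (Pc a).natDegree = 3 := by
  have hd : (Pc a).degree = 3 := by
    rw [Pc]
    rw [Polynomial.degree_add_eq_left_of_degree_lt]
    · exact Polynomial.degree_X_pow 3
    · rw [Polynomial.degree_X_pow]
      exact lt_of_le_of_lt (Polynomial.degree_quadratic_le) (by decide)
  exact Polynomial.natDegree_eq_of_degree_eq_some hd

lemma coeff_two_aux (c2 c1 c0 : ℚ) :
    (X^3 + (C c2 * X^2 + C c1 * X + C c0)).coeff 2 = c2 := by
  simp [Polynomial.coeff_add, Polynomial.coeff_C_mul, Polynomial.coeff_X_pow,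
    Polynomial.coeff_C, Polynomial.coeff_X]

lemma Pc_coeff_two (a : ℕ) : (Pc a).coeff 2 = (a:ℚ) - 3 :=
  coeff_two_aux _ _ _

lemma Pc_eval (a : ℕ) (x : ℚ) :
    (Pc a).eval x = (x-1)^3 + (a:ℚ)*(x-(a:ℚ))^2 := by
  rw [Pc_eq]; simp

lemma Pc_aeval (a : ℕ) (z : ℂ) :
    Polynomial.aeval z (Pc a) = (z-1)^3 + (a:ℂ)*(z-(a:ℂ))^2 := by
  rw [Pc_eq]
  simp only [map_add, map_pow, map_mul, map_sub, Polynomial.aeval_X, Polynomial.aeval_C,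
    Polynomial.aeval_one, map_one]
  push_cast
  ring

noncomputable def BigP (a : ℕ) : ℚ[X] :=
  (∏ i ∈ Finset.range a, (X - C (i:ℚ))) * ((X - C (a:ℚ)) * Pc a)

lemma descFactorial_cast (k a : ℕ) :
    ((k.descFactorial a : ℕ) : ℚ) = ∏ i ∈ Finset.range a, ((k:ℚ) - i) := by
  induction a with
  | zero => simp
  | succ n ih =>
    rw [Finset.prod_range_succ, ← ih, Nat.descFactorial_succ]
    rcases le_or_gt n k with h | h
    · push_cast [Nat.cast_sub h]
      ring
    · have h0 : k.descFactorial n = 0 := Nat.descFactorial_eq_zero_iff_lt.mpr h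
      simp [Nat.descFactorial_succ, h0]

lemma BigP_eval (a k : ℕ) (ha : 1 ≤ a) :
    (BigP a).eval (k:ℚ)
      = ((k.descFactorial a * ((k-a) * ((k-1)^3 + a * (k-a)^2)) : ℕ) : ℚ) := by
  rw [BigP, Polynomial.eval_mul, Polynomial.eval_mul, Polynomial.eval_sub,
    Polynomial.eval_X, Polynomial.eval_C, Polynomial.eval_prod]
  simp only [Polynomial.eval_sub, Polynomial.eval_X, Polynomial.eval_C]
  rw [Pc_eval]
  rcases le_or_gt a k with h | h
  · rw [← descFactorial_cast]
    have h1 : 1 ≤ k := le_trans ha h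
    push_cast [Nat.cast_sub h, Nat.cast_sub h1]
    ring
  · rw [← descFactorial_cast, Nat.descFactorial_eq_zero_iff_lt.mpr h]
    simp

lemma real_pos (a : ℕ) (ha : 3 ≤ a) (x : ℝ) (hx : 2 - 2*(a:ℝ) ≤ x) :
    0 < (x-1)^3 + (a:ℝ)*(x-(a:ℝ))^2 := by
  have ha3 : (3:ℝ) ≤ (a:ℝ) := by exact_mod_cast ha
  rcases le_or_gt x 1 with h1 | h1
  · have hu : 0 ≤ 1 - x := by linarith
    have huu : 1 - x ≤ 2*(a:ℝ) - 1 := by linarith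
    have key : (x-1)^3 + (a:ℝ)*(x-(a:ℝ))^2
        = (1-x)^2*(2*(a:ℝ)-1-(1-x)) + ((a:ℝ)-1)*((a:ℝ)^2-(a:ℝ))
          + ((a:ℝ)-1)*((1-x)*(2*(a:ℝ)-(1-x))) := by ring
    rw [key]
    have t1 : 0 ≤ (1-x)^2*(2*(a:ℝ)-1-(1-x)) :=
      mul_nonneg (sq_nonneg _) (by linarith)
    have t2 : 0 < ((a:ℝ)-1)*((a:ℝ)^2-(a:ℝ)) := by nlinarith
    have t3 : 0 ≤ ((a:ℝ)-1)*((1-x)*(2*(a:ℝ)-(1-x))) :=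
      mul_nonneg (by linarith) (mul_nonneg hu (by linarith))
    linarith
  · have t1 : 0 < (x-1)^3 := pow_pos (by linarith) 3
    have t2 : 0 ≤ (a:ℝ)*(x-(a:ℝ))^2 := mul_nonneg (by positivity) (sq_nonneg _)
    linarith

lemma real_root_lt (a : ℕ) (ha : 3 ≤ a) (x : ℝ)
    (hx : (x-1)^3 + (a:ℝ)*(x-(a:ℝ))^2 = 0) : x < 2 - 2*(a:ℝ) := by
  by_contra h
  push_neg at h
  exact absurd hx (ne_of_gt (real_pos a ha x h))

lemma root_of_real (a : ℕ) (ha : 3 ≤ a) (z : ℂ) (him : z.im = 0)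
    (hz : Polynomial.aeval z (Pc a) = 0) : z.re < 2 - 2*(a:ℝ) := by
  have hzr : ((z.re : ℝ) : ℂ) = z := Complex.ext rfl him.symm
  have h2 : Polynomial.aeval ((z.re : ℝ) : ℂ) (Pc a) = 0 := by rw [hzr]; exact hz
  rw [Pc_aeval] at h2
  have h3 : (((z.re - 1)^3 + (a:ℝ)*(z.re - (a:ℝ))^2 : ℝ) : ℂ) = 0 := by
    rw [← h2]; push_cast; ring
  exact real_root_lt a ha z.re (by exact_mod_cast h3)

lemma exists_good_root (a : ℕ) (ha : 3 ≤ a) :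
    ∃ z : ℂ, Polynomial.aeval z (Pc a) = 0 ∧ z.im ≠ 0 ∧ ((a:ℝ)+1)/2 < z.re := by
  set Q : ℂ[X] := (Pc a).map (algebraMap ℚ ℂ) with hQ
  have haeval : ∀ z : ℂ, Q.eval z = Polynomial.aeval z (Pc a) := fun z => by
    rw [hQ, Polynomial.eval_map, Polynomial.aeval_def]
  have hmonic : Q.Monic := (Pc_monic a).map _
  have hQne : Q ≠ 0 := hmonic.ne_zero
  have hdeg : Q.natDegree = 3 := by
    rw [hQ, (Pc_monic a).natDegree_map, Pc_natDegree]
  have hsplit : Q.Splits := IsAlgClosed.splits Q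
  have hcard : Multiset.card Q.roots = 3 := by
    rw [← hdeg]; exact (Polynomial.splits_iff_card_roots).mp hsplit
  have hnext : Q.nextCoeff = (a:ℂ) - 3 := by
    rw [Polynomial.nextCoeff_of_natDegree_pos (by rw [hdeg]; norm_num), hdeg]
    rw [hQ, Polynomial.coeff_map, Pc_coeff_two, map_sub]
    simp
  have hsum : Q.roots.sum = 3 - (a:ℂ) := by
    have := hsplit.nextCoeff_eq_neg_sum_roots_of_monic hmonic
    rw [hnext] at this
    linear_combination this
  -- a nonreal root exists
  have hex : ∃ z ∈ Q.roots, z.im ≠ 0 := by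
    by_contra hall
    push_neg at hall
    obtain ⟨x, y, w, hxyw⟩ := Multiset.card_eq_three.mp hcard
    have hmx : x ∈ Q.roots := by rw [hxyw]; simp
    have hmy : y ∈ Q.roots := by rw [hxyw]; simp
    have hmw : w ∈ Q.roots := by rw [hxyw]; simp
    have hb : ∀ z ∈ Q.roots, z.re < 2 - 2*(a:ℝ) := by
      intro z hz
      refine root_of_real a ha z (hall z hz) ?_
      rw [← haeval]
      exact (Polynomial.mem_roots hQne).mp hz
    have hsre : x.re + (y.re + w.re) = 3 - (a:ℝ) := by
      have h5 : (Q.roots.sum).re = (3 - (a:ℂ)).re := by rw [hsum]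
      rw [hxyw] at h5
      simpa using h5
    have ha3 : (3:ℝ) ≤ (a:ℝ) := by exact_mod_cast ha
    have := hb x hmx
    have := hb y hmy
    have := hb w hmw
    linarith
  obtain ⟨z, hzmem, hzim⟩ := hex
  have hzroot : Polynomial.aeval z (Pc a) = 0 := by
    rw [← haeval]; exact (Polynomial.mem_roots hQne).mp hzmem
  -- conjugate is also a root
  have hconjroot : Q.IsRoot (starRingEnd ℂ z) := by
    show Q.eval _ = 0
    rw [haeval, Pc_aeval]
    have : (starRingEnd ℂ) ((z-1)^3 + (a:ℂ)*(z-(a:ℂ))^2) = 0 := by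
      rw [Pc_aeval] at hzroot
      rw [hzroot]; simp
    rw [← this]
    simp [map_add, map_pow, map_mul, map_sub]
  have hconjmem : (starRingEnd ℂ z) ∈ Q.roots := (Polynomial.mem_roots hQne).mpr hconjroot
  have hzne : (starRingEnd ℂ z) ≠ z := by
    intro h
    exact hzim ((Complex.conj_eq_iff_im).mp h)
  obtain ⟨s, hs⟩ := Multiset.exists_cons_of_mem hzmem
  have hconjs : (starRingEnd ℂ z) ∈ s := by
    have := hconjmem
    rw [hs, Multiset.mem_cons] at this
    exact this.resolve_left hzne
  obtain ⟨s', hs'⟩ := Multiset.exists_cons_of_mem hconjs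
  have hcard' : Multiset.card s' = 1 := by
    have := hcard
    rw [hs, hs'] at this
    simpa using this
  obtain ⟨w, hw⟩ := Multiset.card_eq_one.mp hcard'
  have hroots : Q.roots = z ::ₘ (starRingEnd ℂ z) ::ₘ {w} := by
    rw [hs, hs', hw]
  have hwmem : w ∈ Q.roots := by rw [hroots]; simp
  have hsum' : z + (starRingEnd ℂ z) + w = 3 - (a:ℂ) := by
    rw [hroots] at hsum
    simpa [add_assoc] using hsum
  have hwim : w.im = 0 := by
    have := congrArg Complex.im hsum'
    simpa [Complex.add_im, Complex.conj_im, Complex.sub_im] using this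
  have hwroot : Polynomial.aeval w (Pc a) = 0 := by
    rw [← haeval]; exact (Polynomial.mem_roots hQne).mp hwmem
  have hwlt : w.re < 2 - 2*(a:ℝ) := root_of_real a ha w hwim hwroot
  have hre : z.re + z.re + w.re = 3 - (a:ℝ) := by
    have h6 := congrArg Complex.re hsum'
    simpa using h6
  refine ⟨z, hzroot, hzim, ?_⟩
  have ha3 : (3:ℝ) ≤ (a:ℝ) := by exact_mod_cast ha
  linarith

end BichromAux

/-- Non-real roots of chromatic polynomials of bichromatic 2-edge-coloured graphs can
have arbitrarily large modulus. -/
theorem bichromatic_nonreal_roots_unbounded (M : ℝ) :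
    ∃ (n : ℕ) (R B : SimpleGraph (Fin n)) (P : Polynomial ℚ) (z : ℂ),
      Disjoint R B ∧ R ≠ ⊥ ∧ B ≠ ⊥ ∧
      (∀ k : ℕ, P.eval (k : ℚ) = numColourings R B ⊥ k) ∧
      z.im ≠ 0 ∧ M < ‖z‖ ∧ Polynomial.aeval z P = 0 := by
  set a : ℕ := 2 * ⌈|M|⌉₊ + 3 with ha_def
  have ha : 3 ≤ a := by omega
  obtain ⟨z, hzroot, hzim, hzre⟩ := BichromAux.exists_good_root a ha
  refine ⟨a + 4, BichromAux.cliqueG a (a+4), BichromAux.starG a (a+4),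
    BichromAux.BigP a, z, ?_, ?_, ?_, ?_, hzim, ?_, ?_⟩
  · rw [disjoint_iff]
    ext u v
    simp only [SimpleGraph.inf_adj, SimpleGraph.bot_adj, iff_false, not_and]
    rintro ⟨h1, h2, h3⟩ (⟨h4, h5⟩ | ⟨h4, h5⟩) <;> omega
  · intro h
    have hadj : (BichromAux.cliqueG a (a+4)).Adj ⟨0, by omega⟩ ⟨1, by omega⟩ :=
      ⟨show (0:ℕ) < a by omega, show (1:ℕ) < a by omega, by simp [Fin.ext_iff]⟩
    rw [h] at hadj
    simp at hadj
  · intro h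
    have hadj : (BichromAux.starG a (a+4)).Adj (BichromAux.ctr a) (BichromAux.leaf a 0) :=
      Or.inl ⟨rfl, by simp [BichromAux.ctr, BichromAux.leaf]⟩
    rw [h] at hadj
    simp at hadj
  · intro k
    rw [BichromAux.count_eq a k, BichromAux.BigP_eval a k (by omega)]
  · have h1 : |M| ≤ (⌈|M|⌉₊ : ℝ) := Nat.le_ceil _
    have h2 : ((a:ℝ)+1)/2 = (⌈|M|⌉₊ : ℝ) + 2 := by
      rw [ha_def]; push_cast; ring
    have h3 : z.re ≤ |z.re| := le_abs_self _
    have h4 := Complex.abs_re_le_norm z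
    have h5 : M ≤ |M| := le_abs_self M
    linarith [hzre]
  · rw [BichromAux.BigP, map_mul, map_mul, hzroot, mul_zero, mul_zero]
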